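/- Let $q$ be a prime, $d$ a positive integer, $G\le \mathrm{AGL}_1(q)\wr S_d$, and $N\trianglelefteq G$ a normal subgroup. Set $G_q:=G\cap C_q^d$ and $N_q:=N\cap C_q^d$. Assume $N$ contains an element $\sigma$ whose image in $S_d$ is a $d$-cycle and with $\sigma^d\in N_q$. Then $G_q/Z$ embeds into $N_q$, where $Z$ is the intersection of $G_q$ with the diagonal under the action of $\sigma$; in particular $[G_q:N_q]$ divides $q$. If moreover $\sigma$ acts on the $qd$ points as a $qd$-cycle and $\gcd(d,q)=1$, then $G_q=N_q$. -/

import Mathlib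

/-- The homomorphism realizing the translation group `C_q^d` inside the wreath product
`AGL₁(q) ≀ S_d ≤ Sym(Fin d × ZMod q)`: the tuple `b` acts by `(i, x) ↦ (i, x + b i)`. -/
def blockTranslations (q d : ℕ) :
    Multiplicative (Fin d → ZMod q) →* Equiv.Perm (Fin d × ZMod q) :=
  MonoidHom.mk'
    (fun b => Equiv.prodShear (Equiv.refl (Fin d))
      (fun i => Equiv.addRight (Multiplicative.toAdd b i)))
    (by
      intro a b
      ext ⟨i, x⟩
      · rfl
      · simp [Equiv.prodShear, add_comm, add_assoc, add_left_comm])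

namespace WAux

variable {q d : ℕ}

def Tr (q d : ℕ) (v : Fin d → ZMod q) : Equiv.Perm (Fin d × ZMod q) :=
  blockTranslations q d (Multiplicative.ofAdd v)

lemma Tr_apply (v : Fin d → ZMod q) (i : Fin d) (x : ZMod q) :
    Tr q d v (i, x) = (i, x + v i) := rfl

lemma Tr_add (u v : Fin d → ZMod q) : Tr q d (u + v) = Tr q d u * Tr q d v :=
  map_mul (blockTranslations q d) (Multiplicative.ofAdd u) (Multiplicative.ofAdd v)

lemma Tr_zero : Tr q d 0 = 1 := map_one (blockTranslations q d)

lemma Tr_neg (v : Fin d → ZMod q) : Tr q d (-v) = (Tr q d v)⁻¹ :=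
  map_inv (blockTranslations q d) (Multiplicative.ofAdd v)

lemma Tr_nsmul (k : ℕ) (v : Fin d → ZMod q) : Tr q d (k • v) = (Tr q d v) ^ k := by
  induction k with
  | zero => simpa using Tr_zero
  | succ k ih => rw [succ_nsmul, Tr_add, ih, pow_succ]

lemma Tr_injective : Function.Injective (Tr q d) := by
  intro u v h
  funext i
  have := congrArg (fun g : Equiv.Perm (Fin d × ZMod q) => (g (i, 0)).2) h
  simpa [Tr_apply] using this

lemma mem_range_iff {g : Equiv.Perm (Fin d × ZMod q)} :
    g ∈ (blockTranslations q d).range ↔ ∃ v, g = Tr q d v := by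
  constructor
  · rintro ⟨w, rfl⟩
    exact ⟨Multiplicative.toAdd w, rfl⟩
  · rintro ⟨v, rfl⟩
    exact ⟨Multiplicative.ofAdd v, rfl⟩

def cf (π : Equiv.Perm (Fin d)) (a : Fin d → (ZMod q)ˣ) :
    (Fin d → ZMod q) →+ (Fin d → ZMod q) :=
  AddMonoidHom.mk' (fun v j => (a (π⁻¹ j) : ZMod q) * v (π⁻¹ j))
    (by intro u v; funext j; simp [mul_add])

lemma cf_apply_pi (π : Equiv.Perm (Fin d)) (a : Fin d → (ZMod q)ˣ)
    (v : Fin d → ZMod q) (i : Fin d) :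
    cf π a v (π i) = (a i : ZMod q) * v i := by
  simp [cf]

variable {σ : Equiv.Perm (Fin d × ZMod q)} {π : Equiv.Perm (Fin d)}
  {a : Fin d → (ZMod q)ˣ} {b : Fin d → ZMod q}

lemma conj_Tr (hσform : ∀ (i : Fin d) (x : ZMod q), σ (i, x) = (π i, (a i : ZMod q) * x + b i))
    (v : Fin d → ZMod q) : σ * Tr q d v * σ⁻¹ = Tr q d (cf π a v) := by
  rw [mul_inv_eq_iff_eq_mul]
  apply Equiv.ext
  rintro ⟨i, x⟩
  show σ (Tr q d v (i, x)) = Tr q d (cf π a v) (σ (i, x))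
  rw [Tr_apply, hσform, hσform, Tr_apply, cf_apply_pi]
  exact Prod.ext rfl (by ring)

lemma conj_pow_Tr (hσform : ∀ (i : Fin d) (x : ZMod q), σ (i, x) = (π i, (a i : ZMod q) * x + b i))
    (k : ℕ) (v : Fin d → ZMod q) :
    σ ^ k * Tr q d v * (σ ^ k)⁻¹ = Tr q d ((cf π a)^[k] v) := by
  induction k with
  | zero => simp
  | succ k ih =>
    rw [Function.iterate_succ_apply', ← conj_Tr hσform, ← ih, pow_succ']
    group

lemma pi_trans (hπc : π.IsCycle) (hmv : ∀ i, π i ≠ i) (i j : Fin d) :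
    ∃ k : ℤ, (π ^ k) i = j :=
  hπc.sameCycle (hmv i) (hmv j)

lemma fixed_eq_zero (hπc : π.IsCycle) (hmv : ∀ i, π i ≠ i)
    {v : Fin d → ZMod q} (hv : cf π a v = v) (i₀ : Fin d) (h0 : v i₀ = 0) :
    v = 0 := by
  have step : ∀ i, v i = 0 → v (π i) = 0 := by
    intro i hi
    have := congrFun hv (π i)
    simp only [cf, AddMonoidHom.mk'_apply, Equiv.Perm.inv_def, Equiv.symm_apply_apply] at this
    rw [← this, hi, mul_zero]
  have step' : ∀ j, v j = 0 → v (π⁻¹ j) = 0 := by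
    intro j hj
    have := congrFun hv j
    simp only [cf, AddMonoidHom.mk'_apply] at this
    rw [hj] at this
    exact (Units.mul_right_eq_zero _).mp this
  have key : ∀ k : ℤ, v ((π ^ k) i₀) = 0 := by
    intro k
    induction k using Int.induction_on with
    | zero => simpa using h0
    | succ k ih =>
      have h1 : (π ^ ((k : ℤ) + 1)) i₀ = π ((π ^ (k : ℤ)) i₀) := by
        have : (π ^ ((k : ℤ) + 1)) = π * π ^ (k : ℤ) := by group
        rw [this]; rfl
      rw [h1]; exact step _ ih
    | pred k ih =>
      have h1 : (π ^ (-(k : ℤ) - 1)) i₀ = π⁻¹ ((π ^ (-(k : ℤ))) i₀) := by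
        have : (π ^ (-(k : ℤ) - 1)) = π⁻¹ * π ^ (-(k : ℤ)) := by group
        rw [this]; rfl
      rw [h1]; exact step' _ ih
  funext j
  obtain ⟨k, hk⟩ := pi_trans hπc hmv i₀ j
  rw [← hk]
  exact key k

lemma comm_eq (hσform : ∀ (i : Fin d) (x : ZMod q), σ (i, x) = (π i, (a i : ZMod q) * x + b i))
    (u : Fin d → ZMod q) :
    Tr q d u * σ * (Tr q d u)⁻¹ * σ⁻¹ = Tr q d (u - cf π a u) := by
  have h1 : σ * Tr q d (-u) * σ⁻¹ = Tr q d (cf π a (-u)) := conj_Tr hσform (-u)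
  calc Tr q d u * σ * (Tr q d u)⁻¹ * σ⁻¹ = Tr q d u * (σ * Tr q d (-u) * σ⁻¹) := by
        rw [Tr_neg]; group
    _ = Tr q d u * Tr q d (cf π a (-u)) := by rw [h1]
    _ = Tr q d (u + cf π a (-u)) := (Tr_add _ _).symm
    _ = Tr q d (u - cf π a u) := by rw [map_neg, ← sub_eq_add_neg]

end WAux

/-- An element of `Sym(Fin d × ZMod q)` lies in the wreath product `AGL₁(q) ≀ S_d` if it
acts by `(i, x) ↦ (π i, aᵢ·x + bᵢ)` for a permutation `π` of the blocks and affine maps on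
the blocks. -/
def IsAGLWreath (q d : ℕ) (g : Equiv.Perm (Fin d × ZMod q)) : Prop :=
  ∃ (π : Equiv.Perm (Fin d)) (a : Fin d → (ZMod q)ˣ) (b : Fin d → ZMod q),
    ∀ (i : Fin d) (x : ZMod q), g (i, x) = (π i, (a i : ZMod q) * x + b i)

/-- Let `q` be prime, `G ≤ AGL₁(q) ≀ S_d` and `N ⊴ G` containing an element `σ` whose block
image is a `d`-cycle and with `σ^d` in the translation part.  Set `G_q = G ∩ C_q^d`,
`N_q = N ∩ C_q^d`, and let `Z` be the intersection of `G_q` with the centralizer of `σ`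
(the "diagonal under `σ`").  Then `G_q/Z` embeds into `N_q`; in particular
`[G_q : N_q] ∣ q`; and if moreover `σ` is a `qd`-cycle and `gcd(d,q) = 1`, then `G_q = N_q`. -/
theorem normal_subgroup_translation_part_index
    (q d : ℕ) (hq : q.Prime) (hd : 0 < d)
    (G N : Subgroup (Equiv.Perm (Fin d × ZMod q)))
    (hG : ∀ g ∈ G, IsAGLWreath q d g)
    (hNG : N ≤ G) (hnormal : ∀ g ∈ G, ∀ n ∈ N, g * n * g⁻¹ ∈ N)
    (σ : Equiv.Perm (Fin d × ZMod q)) (hσN : σ ∈ N)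
    (π : Equiv.Perm (Fin d)) (a : Fin d → (ZMod q)ˣ) (b : Fin d → ZMod q)
    (hσform : ∀ (i : Fin d) (x : ZMod q), σ (i, x) = (π i, (a i : ZMod q) * x + b i))
    (hπ : π.IsCycle ∧ ∀ i : Fin d, π i ≠ i)
    (hσd : σ ^ d ∈ (blockTranslations q d).range) :
    (∃ f : ↥((blockTranslations q d).range ⊓ G) →* ↥((blockTranslations q d).range ⊓ N),
      ∀ x : ↥((blockTranslations q d).range ⊓ G),
        f x = 1 ↔ (x : Equiv.Perm (Fin d × ZMod q)) ∈
          (blockTranslations q d).range ⊓ G ⊓ Subgroup.centralizer {σ}) ∧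
    ((((blockTranslations q d).range ⊓ N).subgroupOf
        ((blockTranslations q d).range ⊓ G)).index ∣ q) ∧
    ((σ.IsCycle ∧ ∀ z : Fin d × ZMod q, σ z ≠ z) → Nat.Coprime d q →
      (blockTranslations q d).range ⊓ G = (blockTranslations q d).range ⊓ N) := by
  classical
  haveI : Fact q.Prime := ⟨hq⟩
  obtain ⟨hπc, hmv⟩ := hπ
  set R := (blockTranslations q d).range with hR
  -- the vector of a translation
  let vec : Equiv.Perm (Fin d × ZMod q) → (Fin d → ZMod q) := fun g i => (g (i, 0)).2
  have vec_Tr : ∀ v : Fin d → ZMod q, vec (WAux.Tr q d v) = v := by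
    intro v; funext i; simp [vec, WAux.Tr_apply]
  have Tr_vec : ∀ g, g ∈ R → WAux.Tr q d (vec g) = g := by
    intro g hg
    obtain ⟨v, rfl⟩ := WAux.mem_range_iff.mp hg
    rw [vec_Tr]
  -- the homomorphism
  have memf : ∀ x : ↥(R ⊓ G), (x : Equiv.Perm (Fin d × ZMod q)) * σ * (x : Equiv.Perm (Fin d × ZMod q))⁻¹ * σ⁻¹ ∈ R ⊓ N := by
    intro x
    rw [Subgroup.mem_inf]
    constructor
    · rw [← Tr_vec _ x.2.1, WAux.comm_eq hσform]
      exact WAux.mem_range_iff.mpr ⟨_, rfl⟩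
    · exact mul_mem (hnormal _ x.2.2 σ hσN) (inv_mem hσN)
  let f : ↥(R ⊓ G) →* ↥(R ⊓ N) := MonoidHom.mk'
    (fun x => ⟨(x : Equiv.Perm (Fin d × ZMod q)) * σ * (x : Equiv.Perm (Fin d × ZMod q))⁻¹ * σ⁻¹, memf x⟩)
    (by
      intro x y
      apply Subtype.ext
      show (↑(x * y) : Equiv.Perm (Fin d × ZMod q)) * σ * (↑(x * y))⁻¹ * σ⁻¹ = _
      have hx := Tr_vec _ x.2.1
      have hy := Tr_vec _ y.2.1
      have hxy : (↑(x * y) : Equiv.Perm (Fin d × ZMod q)) = WAux.Tr q d (vec ↑x + vec ↑y) := by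
        rw [WAux.Tr_add, hx, hy]; rfl
      rw [hxy, WAux.comm_eq hσform]
      show _ = (↑x * σ * (↑x)⁻¹ * σ⁻¹) * (↑y * σ * (↑y)⁻¹ * σ⁻¹)
      rw [← hx, ← hy, WAux.comm_eq hσform, WAux.comm_eq hσform, ← WAux.Tr_add]
      congr 1
      rw [map_add]
      simp only [vec_Tr]
      abel)
  have fone : ∀ x : ↥(R ⊓ G), f x = 1 ↔
      (x : Equiv.Perm (Fin d × ZMod q)) ∈ R ⊓ G ⊓ Subgroup.centralizer {σ} := by
    intro x
    rw [Subtype.ext_iff, Subgroup.mem_inf]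
    show (↑x * σ * (↑x)⁻¹ * σ⁻¹ = 1) ↔ _
    constructor
    · intro h
      refine ⟨x.2, ?_⟩
      rw [Subgroup.mem_centralizer_iff]
      intro h' hh'
      rw [Set.mem_singleton_iff] at hh'
      rw [hh']
      have h2 : (↑x : Equiv.Perm (Fin d × ZMod q)) * σ * (↑x)⁻¹ = σ := by
        rwa [mul_inv_eq_one] at h
      rw [mul_inv_eq_iff_eq_mul] at h2
      exact h2.symm
    · rintro ⟨-, hc⟩
      rw [Subgroup.mem_centralizer_iff] at hc
      have h2 := hc σ rfl
      rw [mul_inv_eq_one, mul_inv_eq_iff_eq_mul]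
      exact h2.symm
  refine ⟨⟨f, fone⟩, ?_, ?_⟩
  · -- the index divides q
    let ι : ↥(R ⊓ N) →* ↥(R ⊓ G) := Subgroup.inclusion (inf_le_inf_left R hNG)
    let f' := ι.comp f
    have hrange : f'.range ≤ (R ⊓ N).subgroupOf (R ⊓ G) := by
      rintro z ⟨x, rfl⟩
      rw [Subgroup.mem_subgroupOf]
      exact (f x).2
    have h1 := Subgroup.index_dvd_of_le hrange
    have hker : Nat.card f'.ker ∣ q := by
      let i₀ : Fin d := ⟨0, hd⟩
      let ψ : ↥f'.ker →* Multiplicative (ZMod q) := MonoidHom.mk'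
        (fun x => Multiplicative.ofAdd
          (vec ((x : ↥(R ⊓ G)) : Equiv.Perm (Fin d × ZMod q)) i₀))
        (by
          intro x y
          have hx := Tr_vec _ (x : ↥(R ⊓ G)).2.1
          have hy := Tr_vec _ (y : ↥(R ⊓ G)).2.1
          have hxy : ((↑(x * y) : ↥(R ⊓ G)) : Equiv.Perm (Fin d × ZMod q)) =
              WAux.Tr q d (vec ↑↑x + vec ↑↑y) := by
            rw [WAux.Tr_add, hx, hy]; rfl
          show Multiplicative.ofAdd _ = Multiplicative.ofAdd _ * Multiplicative.ofAdd _
          rw [hxy, vec_Tr]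
          rfl)
      have hinj : Function.Injective ψ := by
        rw [injective_iff_map_eq_one]
        intro x hx1
        have hmem : f' ↑x = 1 := x.2
        have hfx : f ↑x = 1 := by
          apply Subgroup.inclusion_injective (inf_le_inf_left R hNG)
          rw [show Subgroup.inclusion (inf_le_inf_left R hNG) (f ↑x) = f' ↑x from rfl, hmem]
          rfl
        have hu : WAux.Tr q d (vec ((↑x : ↥(R ⊓ G)) : Equiv.Perm (Fin d × ZMod q))) = ↑↑x :=
          Tr_vec _ (x : ↥(R ⊓ G)).2.1
        have hcomm : WAux.Tr q d (vec ((↑x : ↥(R ⊓ G)) : Equiv.Perm (Fin d × ZMod q)) -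
            WAux.cf π a (vec ((↑x : ↥(R ⊓ G)) : Equiv.Perm (Fin d × ZMod q)))) = 1 := by
          rw [← WAux.comm_eq hσform, hu]
          exact congrArg Subtype.val hfx
        have hz : vec ((↑x : ↥(R ⊓ G)) : Equiv.Perm (Fin d × ZMod q)) -
            WAux.cf π a (vec ((↑x : ↥(R ⊓ G)) : Equiv.Perm (Fin d × ZMod q))) = 0 :=
          WAux.Tr_injective (by rw [hcomm, WAux.Tr_zero])
        have hfix : WAux.cf π a (vec ((↑x : ↥(R ⊓ G)) : Equiv.Perm (Fin d × ZMod q))) =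
            vec ((↑x : ↥(R ⊓ G)) : Equiv.Perm (Fin d × ZMod q)) :=
          (sub_eq_zero.mp hz).symm
        have h0 : vec ((↑x : ↥(R ⊓ G)) : Equiv.Perm (Fin d × ZMod q)) i₀ = 0 := hx1
        have hv0 := WAux.fixed_eq_zero hπc hmv hfix i₀ h0
        apply Subtype.ext
        apply Subtype.ext
        show ((↑x : ↥(R ⊓ G)) : Equiv.Perm (Fin d × ZMod q)) = 1
        rw [← hu, hv0, WAux.Tr_zero]
      have hdvd := Subgroup.card_dvd_of_injective ψ hinj
      have : Nat.card (Multiplicative (ZMod q)) = q := Nat.card_zmod q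
      rwa [this] at hdvd
    have hne : f'.ker.index ≠ 0 := Subgroup.index_ne_zero_of_finite
    have hcr : Nat.card f'.range = f'.ker.index :=
      (Nat.card_congr (QuotientGroup.quotientKerEquivRange f').toEquiv).symm
    have e1 : Nat.card f'.range * f'.range.index = Nat.card ↥(R ⊓ G) :=
      Subgroup.card_mul_index _
    have e2 : Nat.card f'.ker * f'.ker.index = Nat.card ↥(R ⊓ G) :=
      Subgroup.card_mul_index _
    have e3 : f'.range.index = Nat.card f'.ker := by
      apply Nat.eq_of_mul_eq_mul_left (Nat.pos_of_ne_zero hne)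
      rw [← hcr]
      calc Nat.card ↥f'.range * f'.range.index = Nat.card ↥(R ⊓ G) := e1
        _ = Nat.card ↥f'.ker * f'.ker.index := e2.symm
        _ = Nat.card ↥f'.range * Nat.card ↥f'.ker := by rw [← hcr, mul_comm]
    exact dvd_trans h1 (e3 ▸ hker)
  · rintro ⟨hcyc, hnofix⟩ hcop
    apply le_antisymm
    · rintro g hg
      rw [Subgroup.mem_inf] at hg ⊢
      obtain ⟨hgR, hgG⟩ := hg
      refine ⟨hgR, ?_⟩
      obtain ⟨s, hs⟩ := WAux.mem_range_iff.mp hσd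
      set u := vec g with hu
      have hgu : WAux.Tr q d u = g := Tr_vec _ hgR
      let NV : AddSubgroup (Fin d → ZMod q) :=
        { carrier := {v | WAux.Tr q d v ∈ N}
          add_mem' := fun hv hw => by
            simp only [Set.mem_setOf_eq] at *
            rw [WAux.Tr_add]; exact mul_mem hv hw
          zero_mem' := by
            simp only [Set.mem_setOf_eq]
            rw [WAux.Tr_zero]; exact one_mem N
          neg_mem' := fun hv => by
            simp only [Set.mem_setOf_eq] at *
            rw [WAux.Tr_neg]; exact inv_mem hv }
      have hNVmem : ∀ v, v ∈ NV ↔ WAux.Tr q d v ∈ N := fun v => Iff.rfl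
      have hNVc : ∀ v ∈ NV, WAux.cf π a v ∈ NV := by
        intro v hv
        rw [hNVmem] at hv ⊢
        rw [← WAux.conj_Tr hσform]
        exact hnormal σ (hNG hσN) _ hv
      have hbase : u - WAux.cf π a u ∈ NV := by
        rw [hNVmem, ← WAux.comm_eq hσform, hgu]
        exact mul_mem (hnormal g hgG σ hσN) (inv_mem hσN)
      have hiter : ∀ k : ℕ, u - (WAux.cf π a)^[k] u ∈ NV := by
        intro k
        induction k with
        | zero => simpa using NV.zero_mem
        | succ k ih =>
          have heq : u - (WAux.cf π a)^[k + 1] u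
              = (u - WAux.cf π a u) + WAux.cf π a (u - (WAux.cf π a)^[k] u) := by
            rw [Function.iterate_succ_apply', map_sub]
            abel
          rw [heq]
          exact NV.add_mem hbase (hNVc _ ih)
      have hsfix : WAux.cf π a s = s := by
        apply WAux.Tr_injective
        rw [← WAux.conj_Tr hσform, ← hs]
        group
      have hcd : (WAux.cf π a)^[d] u = u := by
        apply WAux.Tr_injective
        rw [← WAux.conj_pow_Tr hσform, hs, ← WAux.Tr_neg, ← WAux.Tr_add, ← WAux.Tr_add]
        congr 1
        abel
      set S := ∑ k ∈ Finset.range d, (WAux.cf π a)^[k] u with hSdef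
      have hdS : d • u - S ∈ NV := by
        have hrw : d • u - S = ∑ k ∈ Finset.range d, (u - (WAux.cf π a)^[k] u) := by
          rw [Finset.sum_sub_distrib, Finset.sum_const, Finset.card_range]
        rw [hrw]
        exact AddSubgroup.sum_mem NV fun k _ => hiter k
      have hSfix : WAux.cf π a S = S := by
        rw [hSdef, map_sum]
        have h1 : ∀ k, WAux.cf π a ((WAux.cf π a)^[k] u) = (WAux.cf π a)^[k + 1] u := fun k =>
          (Function.iterate_succ_apply' _ _ _).symm
        rw [Finset.sum_congr rfl fun k _ => h1 k]
        have h2 := Finset.sum_range_succ' (fun k => (WAux.cf π a)^[k] u) d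
        have h3 := Finset.sum_range_succ (fun k => (WAux.cf π a)^[k] u) d
        have h4 := h2.symm.trans h3
        simp only [Function.iterate_zero, id_eq, hcd] at h4
        exact add_right_cancel h4
      let i₀ : Fin d := ⟨0, hd⟩
      have hsig_ord : orderOf σ = d * q := by
        rw [hcyc.orderOf]
        have huniv : σ.support = Finset.univ := Finset.eq_univ_iff_forall.mpr fun z =>
          Equiv.Perm.mem_support.mpr (hnofix z)
        rw [huniv]
        simp [Finset.card_univ, ZMod.card]
      have hsd_ne : σ ^ d ≠ 1 := by
        intro hcon
        have hdvd : orderOf σ ∣ d := orderOf_dvd_of_pow_eq_one hcon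
        rw [hsig_ord] at hdvd
        have hle : d * q ≤ d := Nat.le_of_dvd hd hdvd
        nlinarith [hq.two_le]
      have hs0 : s i₀ ≠ 0 := by
        intro hcon
        have hz := WAux.fixed_eq_zero hπc hmv hsfix i₀ hcon
        apply hsd_ne
        rw [hs, hz, WAux.Tr_zero]
      have hDN : ∀ v, WAux.cf π a v = v → v ∈ NV := by
        intro v hvfix
        set k : ℕ := (v i₀ * (s i₀)⁻¹).val with hk
        have hcast : ((k : ℕ) : ZMod q) = v i₀ * (s i₀)⁻¹ := by
          rw [hk]; simp [ZMod.natCast_val, ZMod.cast_id]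
        have hvk : v = k • s := by
          have hfix2 : WAux.cf π a (v - k • s) = v - k • s := by
            rw [map_sub, hvfix, map_nsmul, hsfix]
          have h0 : (v - k • s) i₀ = 0 := by
            simp only [Pi.sub_apply, Pi.smul_apply]
            rw [nsmul_eq_mul, hcast, mul_assoc, inv_mul_cancel₀ hs0, mul_one, sub_self]
          have hz := WAux.fixed_eq_zero hπc hmv hfix2 i₀ h0
          exact sub_eq_zero.mp hz
        rw [hNVmem, hvk, WAux.Tr_nsmul, ← hs]
        exact pow_mem (pow_mem hσN d) k
      have hSN : S ∈ NV := hDN S hSfix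
      have hduNV : d • u ∈ NV := by
        have hmem := NV.add_mem hdS hSN
        have : d • u - S + S = d • u := by abel
        rwa [this] at hmem
      have hq0 : (q : ℕ) • u = 0 := by
        funext i
        simp only [Pi.smul_apply, Pi.zero_apply, nsmul_eq_mul, ZMod.natCast_self, zero_mul]
      have hbez1 : (1 : ℤ) = d * Nat.gcdA d q + q * Nat.gcdB d q := by
        have hb := Nat.gcd_eq_gcd_ab d q
        rwa [Nat.Coprime.gcd_eq_one hcop, Nat.cast_one] at hb
      have huNV : u ∈ NV := by
        have hu1 : u = Nat.gcdA d q • (d • u) + Nat.gcdB d q • ((q : ℕ) • u) := by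
          calc u = ((d * Nat.gcdA d q + q * Nat.gcdB d q : ℤ)) • u := by
                rw [← hbez1, one_smul]
            _ = ((d : ℤ) * Nat.gcdA d q) • u + ((q : ℤ) * Nat.gcdB d q) • u := add_smul _ _ _
            _ = Nat.gcdA d q • ((d : ℕ) • u) + Nat.gcdB d q • ((q : ℕ) • u) := by
                rw [mul_comm (d : ℤ), mul_comm (q : ℤ), mul_smul, mul_smul,
                  natCast_zsmul, natCast_zsmul]
        rw [hu1, hq0, smul_zero, add_zero]
        exact AddSubgroup.zsmul_mem NV hduNV _
      rw [← hgu]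
      exact huNV
    · exact inf_le_inf_left R hNG
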